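/- For all integers $n \ge 2$ and $d \ge 2$, the quantity $G_{d,n} = \sum_{k=1}^{n-d+2} (2^{k-1}-1)\binom{n-k-1}{n-k-d+2}$ equals $G'_{d,n} = \sum_{i \le n-d,\ i \equiv n-d \pmod 2} \binom{n}{i}$. -/

import Mathlib

/-- Integer binomial coefficient: `binom m r = C(m,r)` for `0 ≤ r ≤ m`, `0` otherwise,
with the additional convention `binom (-1) 0 = 1`. -/
def binom (m r : ℤ) : ℤ :=
  if 0 ≤ r ∧ r ≤ m then (Nat.choose m.toNat r.toNat : ℤ)
  else if m = -1 ∧ r = 0 then 1 else 0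

/-- `G_{d,n} = ∑_{k=1}^{n-d+2} (2^{k-1}-1) C(n-k-1, n-k-d+2)`. -/
noncomputable def Gdn (d n : ℤ) : ℤ :=
  ∑ k ∈ Finset.Icc (1 : ℤ) (n - d + 2), (2 ^ (k - 1).toNat - 1) * binom (n - k - 1) (n - k - d + 2)

/-- `G'_{d,n} = ∑_{0 ≤ i ≤ n-d, i ≡ n-d mod 2} C(n, i)`. -/
noncomputable def Gdn' (d n : ℤ) : ℤ :=
  ∑ i ∈ (Finset.Icc (0 : ℤ) (n - d)).filter (fun i => (n - d - i) % 2 = 0), binom n i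

lemma binom_eq (m r : ℤ) (hm : -1 ≤ m) (hr : 0 ≤ r) :
    binom m r = (Nat.choose m.toNat r.toNat : ℤ) := by
  unfold binom
  split_ifs with h1 h2
  · rfl
  · obtain ⟨h3, h4⟩ := h2
    subst h3 h4; norm_num
  · have : m.toNat < r.toNat := by omega
    rw [Nat.choose_eq_zero_of_lt this]; norm_num

def fNat (N a : ℕ) : ℤ :=
  ∑ i ∈ Finset.range (a+1), if (a-i) % 2 = 0 then (N.choose i : ℤ) else 0

def gNat (N a : ℕ) : ℤ :=
  ∑ j ∈ Finset.range (a+2), ((2:ℤ)^j - 1) * ((N-2-j).choose (a+1-j) : ℤ)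

lemma bridgeG (n d : ℤ) (hn : 2 ≤ n) (hd : 2 ≤ d) (hm : 0 ≤ n - d) :
    Gdn d n = gNat n.toNat (n-d).toNat := by
  unfold Gdn gNat
  refine Finset.sum_nbij' (fun k => (k-1).toNat) (fun j => (j:ℤ)+1) ?_ ?_ ?_ ?_ ?_
  · intro k hk
    simp only [Finset.mem_Icc] at hk
    simp only [Finset.mem_range]
    omega
  · intro j hj
    simp only [Finset.mem_range] at hj
    simp only [Finset.mem_Icc]
    omega
  · intro k hk
    simp only [Finset.mem_Icc] at hk
    omega
  · intro j hj
    simp only [Finset.mem_range] at hj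
    omega
  · intro k hk
    simp only [Finset.mem_Icc] at hk
    rw [binom_eq (n-k-1) (n-k-d+2) (by omega) (by omega)]
    have e1 : (n-k-1).toNat = n.toNat - 2 - (k-1).toNat := by omega
    have e2 : (n-k-d+2).toNat = (n-d).toNat + 1 - (k-1).toNat := by omega
    rw [e1, e2]

lemma bridgeF (n d : ℤ) (hn : 2 ≤ n) (hd : 2 ≤ d) (hm : 0 ≤ n - d) :
    Gdn' d n = fNat n.toNat (n-d).toNat := by
  unfold Gdn' fNat
  rw [Finset.sum_filter]
  refine Finset.sum_nbij' (fun i => i.toNat) (fun i => (i:ℤ)) ?_ ?_ ?_ ?_ ?_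
  · intro i hi
    simp only [Finset.mem_Icc] at hi
    simp only [Finset.mem_range]
    omega
  · intro i hi
    simp only [Finset.mem_range] at hi
    simp only [Finset.mem_Icc]
    omega
  · intro i hi
    simp only [Finset.mem_Icc] at hi
    omega
  · intro i _
    omega
  · intro i hi
    simp only [Finset.mem_Icc] at hi
    have hcond : ((n - d - i) % 2 = 0) ↔ (((n-d).toNat - i.toNat) % 2 = 0) := by omega
    by_cases hc : (n - d - i) % 2 = 0
    · rw [if_pos hc, if_pos (hcond.mp hc)]
      rw [binom_eq n i (by omega) (by omega)]
    · rw [if_neg hc, if_neg (fun h => hc (hcond.mpr h))]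

lemma frec (N a : ℕ) : fNat (N+1) (a+1) = fNat N (a+1) + fNat N a := by
  unfold fNat
  rw [Finset.sum_range_succ' (fun i => if (a+1-i) % 2 = 0 then ((N+1).choose i : ℤ) else 0) (a+1)]
  rw [Finset.sum_range_succ' (fun i => if (a+1-i) % 2 = 0 then (N.choose i : ℤ) else 0) (a+1)]
  have key : ∀ i ∈ Finset.range (a+1),
      (if (a+1-(i+1)) % 2 = 0 then ((N+1).choose (i+1) : ℤ) else 0)
      = (if (a+1-(i+1)) % 2 = 0 then (N.choose (i+1) : ℤ) else 0)
        + (if (a-i) % 2 = 0 then (N.choose i : ℤ) else 0) := by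
    intro i _
    have h1 : a + 1 - (i+1) = a - i := by omega
    rw [h1, Nat.choose_succ_succ']
    split_ifs
    · push_cast; ring
    · ring
  rw [Finset.sum_congr rfl key, Finset.sum_add_distrib]
  have h0 : a + 1 - 0 = a + 1 := rfl
  simp only [h0, Nat.choose_zero_right, Nat.cast_one]
  ring

lemma grec (N a : ℕ) (h : a + 3 ≤ N) : gNat (N+1) (a+1) = gNat N (a+1) + gNat N a := by
  unfold gNat
  rw [Finset.sum_range_succ (fun j => ((2:ℤ)^j - 1) * ((N+1-2-j).choose (a+1+1-j) : ℤ)) (a+2)]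
  rw [Finset.sum_range_succ (fun j => ((2:ℤ)^j - 1) * ((N-2-j).choose (a+1+1-j) : ℤ)) (a+2)]
  have key : ∀ j ∈ Finset.range (a+2),
      ((2:ℤ)^j - 1) * ((N+1-2-j).choose (a+1+1-j) : ℤ)
      = ((2:ℤ)^j - 1) * ((N-2-j).choose (a+1+1-j) : ℤ)
        + ((2:ℤ)^j - 1) * ((N-2-j).choose (a+1-j) : ℤ) := by
    intro j hj
    simp only [Finset.mem_range] at hj
    have h1 : N + 1 - 2 - j = (N - 2 - j) + 1 := by omega
    have h2 : a + 1 + 1 - j = (a + 1 - j) + 1 := by omega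
    rw [h1, h2, Nat.choose_succ_succ']
    push_cast; ring
  rw [Finset.sum_congr rfl key, Finset.sum_add_distrib]
  have e1 : N + 1 - 2 - (a+2) = N - 3 - a := by omega
  have e2 : N - 2 - (a+2) = N - 4 - a := by omega
  have e3 : a + 1 + 1 - (a+2) = 0 := by omega
  simp only [e1, e2, e3, Nat.choose_zero_right, Nat.cast_one]
  ring

lemma gbound (N : ℕ) (h : 2 ≤ N) : gNat N (N-2) = 2^(N-1) - 1 := by
  unfold gNat
  have hr : N - 2 + 2 = N := by omega
  rw [hr]
  rw [Finset.sum_eq_single (N-1)]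
  · have e1 : N - 2 - (N-1) = 0 := by omega
    have e2 : N - 2 + 1 - (N-1) = 0 := by omega
    rw [e1, e2]; simp
  · intro j hj hne
    simp only [Finset.mem_range] at hj
    have : N - 2 + 1 - j = (N - 2 - j) + 1 := by omega
    rw [this, Nat.choose_eq_zero_of_lt (by omega)]
    norm_num
  · intro h'
    simp only [Finset.mem_range] at h'
    omega

lemma evenSum (N : ℕ) (h : 1 ≤ N) :
    ∑ i ∈ Finset.range (N+1), (if (N-i) % 2 = 0 then (N.choose i : ℤ) else 0) = 2^(N-1) := by
  have halt := Int.alternating_sum_range_choose (n := N)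
  rw [if_neg (by omega)] at halt
  have htot : ∑ i ∈ Finset.range (N+1), (N.choose i : ℤ) = 2^N := by
    have := Nat.sum_range_choose N
    exact_mod_cast congrArg (Nat.cast : ℕ → ℤ) this
  have key : ∀ i ∈ Finset.range (N+1),
      2 * (if (N-i) % 2 = 0 then (N.choose i : ℤ) else 0)
      = (N.choose i : ℤ) + (-1)^N * ((-1)^i * (N.choose i : ℤ)) := by
    intro i hi
    simp only [Finset.mem_range] at hi
    have hpow : (-1:ℤ)^N * (-1)^i = (-1)^(N+i) := by rw [pow_add]
    rcases Nat.even_or_odd (N + i) with he | ho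
    · obtain ⟨k, hk⟩ := he
      rw [if_pos (by omega)]
      have : (-1:ℤ)^(N+i) = 1 := Even.neg_one_pow ⟨k, hk⟩
      rw [← mul_assoc, hpow, this]; ring
    · obtain ⟨k, hk⟩ := ho
      rw [if_neg (by omega)]
      have : (-1:ℤ)^(N+i) = -1 := Odd.neg_one_pow ⟨k, hk⟩
      rw [← mul_assoc, hpow, this]; ring
  have h2 : 2 * ∑ i ∈ Finset.range (N+1), (if (N-i) % 2 = 0 then (N.choose i : ℤ) else 0)
      = 2^N := by
    rw [Finset.mul_sum, Finset.sum_congr rfl key, Finset.sum_add_distrib, htot,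
      ← Finset.mul_sum, halt]
    ring
  have hN : (2:ℤ)^N = 2 * 2^(N-1) := by
    rw [← pow_succ']
    congr 1
    omega
  omega

lemma fbound (N : ℕ) (h : 2 ≤ N) : fNat N (N-2) = 2^(N-1) - 1 := by
  obtain ⟨M, rfl⟩ : ∃ M, N = M + 2 := ⟨N-2, by omega⟩
  have hE := evenSum (M+2) (by omega)
  rw [show M+2+1 = (M+1)+1+1 from rfl, Finset.sum_range_succ, Finset.sum_range_succ] at hE
  rw [if_neg (by omega), if_pos (by omega), Nat.choose_self] at hE
  unfold fNat
  simp only [Nat.add_sub_cancel]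
  have key : ∀ i ∈ Finset.range (M+1),
      (if (M-i) % 2 = 0 then ((M+2).choose i : ℤ) else 0)
      = (if (M+2-i) % 2 = 0 then ((M+2).choose i : ℤ) else 0) := by
    intro i hi
    simp only [Finset.mem_range] at hi
    have : (M-i) % 2 = (M+2-i) % 2 := by omega
    rw [this]
  rw [Finset.sum_congr rfl key]
  have e : M + 2 - 1 = M + 1 := rfl
  rw [e] at hE
  push_cast at hE ⊢
  linarith

lemma mainNat (N : ℕ) : ∀ a : ℕ, a + 2 ≤ N → gNat N a = fNat N a := by
  induction N using Nat.strong_induction_on with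
  | _ N ih =>
    intro a ha
    rcases Nat.eq_zero_or_pos a with rfl | hpos
    · unfold gNat fNat
      simp [Finset.sum_range_succ]
    · by_cases hb : a = N - 2
      · rw [hb, gbound N (by omega), fbound N (by omega)]
      · have h3 : a + 3 ≤ N := by omega
        obtain ⟨M, rfl⟩ : ∃ M, N = M + 1 := ⟨N-1, by omega⟩
        obtain ⟨b, rfl⟩ : ∃ b, a = b + 1 := ⟨a-1, by omega⟩
        rw [grec M b (by omega), frec M b,
          ih M (by omega) (b+1) (by omega), ih M (by omega) b (by omega)]


/-- for all integers `n ≥ 2` and `d ≥ 2`, `G_{d,n} = G'_{d,n}`. -/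
theorem stmt_1 (n d : ℤ) (hn : 2 ≤ n) (hd : 2 ≤ d) : Gdn d n = Gdn' d n := by
  by_cases hm : 0 ≤ n - d
  · rw [bridgeG n d hn hd hm, bridgeF n d hn hd hm]
    exact mainNat n.toNat (n-d).toNat (by omega)
  · have h1 : Gdn' d n = 0 := by
      unfold Gdn'
      rw [Finset.filter_eq_empty_iff.mpr, Finset.sum_empty]
      intro i hi
      simp only [Finset.mem_Icc] at hi
      omega
    rw [h1]
    unfold Gdn
    by_cases h2 : n - d = -1
    · rw [h2]
      norm_num
    · rw [show n - d + 2 = (n-d) + 2 from rfl]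
      rw [Finset.Icc_eq_empty (by omega), Finset.sum_empty]
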